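/- Let σ > 0, let X ~ N(0,1) and Δ ~ N(0,σ²) be independent real Gaussian random variables. Then P(X < 0 and X + Δ > 0) = arctan(σ)/(2π). -/

import Mathlib

open MeasureTheory ProbabilityTheory Real Set

namespace SignFlipAux

lemma wedge_iff (σ : ℝ) (hσ : 0 < σ) {θ : ℝ} (hθ₁ : -π < θ) (hθ₂ : θ < π) :
    (Real.cos θ < 0 ∧ 0 < Real.cos θ + σ * Real.sin θ) ↔
      (π / 2 < θ ∧ θ < π / 2 + Real.arctan σ) := by
  have harc : Real.arctan σ < π / 2 := Real.arctan_lt_pi_div_two σ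
  have harcpos : 0 < Real.arctan σ := by simpa using Real.arctan_strictMono hσ
  constructor
  · rintro ⟨hc, hs⟩
    have hsin : 0 < Real.sin θ := by
      by_contra h
      push_neg at h
      have := mul_nonpos_of_nonneg_of_nonpos hσ.le h
      linarith
    have hθpos : 0 < θ := by
      by_contra h
      push_neg at h
      have := Real.sin_nonpos_of_nonpos_of_neg_pi_le h hθ₁.le
      linarith
    have h2 : π / 2 < θ := by
      by_contra h
      push_neg at h
      have := Real.cos_nonneg_of_mem_Icc ⟨by linarith [Real.pi_pos], h⟩
      linarith
    have hφcos : 0 < Real.cos (θ - π / 2) := by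
      rw [Real.cos_sub_pi_div_two]; exact hsin
    have htan : Real.tan (θ - π / 2) < σ := by
      rw [Real.tan_eq_sin_div_cos, div_lt_iff₀ hφcos, Real.sin_sub_pi_div_two,
        Real.cos_sub_pi_div_two]
      linarith
    have hlt : θ - π / 2 < Real.arctan σ := by
      have heq : Real.arctan (Real.tan (θ - π / 2)) = θ - π / 2 :=
        Real.arctan_tan (by linarith) (by linarith)
      calc θ - π / 2 = Real.arctan (Real.tan (θ - π / 2)) := heq.symm
        _ < Real.arctan σ := Real.arctan_strictMono htan
    exact ⟨h2, by linarith⟩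
  · rintro ⟨h1, h2⟩
    have hc : Real.cos θ < 0 :=
      Real.cos_neg_of_pi_div_two_lt_of_lt h1 (by linarith [Real.pi_pos])
    refine ⟨hc, ?_⟩
    have hφcos : 0 < Real.cos (θ - π / 2) :=
      Real.cos_pos_of_mem_Ioo ⟨by linarith, by linarith⟩
    have htan : Real.tan (θ - π / 2) < σ := by
      by_contra h
      push_neg at h
      have := Real.arctan_strictMono.monotone h
      rw [Real.arctan_tan (by linarith) (by linarith)] at this
      linarith
    rw [Real.tan_eq_sin_div_cos, div_lt_iff₀ hφcos, Real.sin_sub_pi_div_two,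
      Real.cos_sub_pi_div_two] at htan
    linarith

lemma radial_integral : ∫ r in Ioi (0:ℝ), r * Real.exp (-(r ^ 2) / 2) = 1 := by
  have hA : ∀ x : ℝ, HasDerivAt (fun y : ℝ => -Real.exp (-(y ^ 2) / 2))
      (x * Real.exp (-(x ^ 2) / 2)) x := by
    intro x
    have h1 : HasDerivAt (fun y : ℝ => -(y ^ 2) / 2) (-x) x := by
      have := ((hasDerivAt_pow 2 x).neg.div_const 2)
      refine this.congr_deriv ?_
      push_cast; ring
    have h2 := h1.exp.neg
    refine h2.congr_deriv ?_
    ring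
  have hint : IntegrableOn (fun x : ℝ => x * Real.exp (-(x ^ 2) / 2)) (Ioi 0) := by
    have := (integrable_mul_exp_neg_mul_sq (b := 1/2) (by norm_num)).integrableOn
      (s := Ioi (0:ℝ))
    refine this.congr_fun (fun x _ => ?_) measurableSet_Ioi
    ring_nf
  have hB : Filter.Tendsto (fun y : ℝ => -Real.exp (-(y ^ 2) / 2)) Filter.atTop (nhds 0) := by
    rw [show (0:ℝ) = -0 by ring]
    refine Filter.Tendsto.neg ?_
    refine Real.tendsto_exp_atBot.comp ?_
    have h := (Filter.tendsto_pow_atTop (α := ℝ) two_ne_zero).atTop_mul_const_of_neg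
      (show -(1/2:ℝ) < 0 by norm_num)
    refine h.congr fun y => by ring
  have := integral_Ioi_of_hasDerivAt_of_tendsto' (f := fun y : ℝ => -Real.exp (-(y ^ 2) / 2))
    (fun x _ => hA x) hint hB
  rw [this]
  norm_num

lemma gaussian_prod_eq :
    (gaussianReal 0 1).prod (gaussianReal 0 1)
      = ((volume : Measure ℝ).prod (volume : Measure ℝ)).withDensity
          (fun p => gaussianPDF 0 1 p.1 * gaussianPDF 0 1 p.2) := by
  refine Measure.prod_eq fun s t hs ht => ?_
  rw [withDensity_apply _ (hs.prod ht), ← Measure.prod_restrict,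
    lintegral_prod_mul (measurable_gaussianPDF 0 1).aemeasurable
      (measurable_gaussianPDF 0 1).aemeasurable,
    gaussianReal_apply 0 one_ne_zero s, gaussianReal_apply 0 one_ne_zero t]

lemma key (σ : ℝ) (hσ : 0 < σ) :
    ((gaussianReal 0 1).prod (gaussianReal 0 1)) {p : ℝ × ℝ | p.1 < 0 ∧ 0 < p.1 + σ * p.2}
      = ENNReal.ofReal (Real.arctan σ / (2 * π)) := by
  have harc : Real.arctan σ < π / 2 := Real.arctan_lt_pi_div_two σ
  set W : Set (ℝ × ℝ) := {p | p.1 < 0 ∧ 0 < p.1 + σ * p.2} with hWdef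
  have hW : MeasurableSet W := by
    refine MeasurableSet.inter ?_ ?_
    · exact measurableSet_lt measurable_fst measurable_const
    · exact measurableSet_lt measurable_const (measurable_fst.add (measurable_snd.const_mul σ))
  set d : ℝ × ℝ → ℝ := fun p => gaussianPDFReal 0 1 p.1 * gaussianPDFReal 0 1 p.2 with hd_def
  rw [gaussian_prod_eq, withDensity_apply _ hW]
  have hpt : ∀ p : ℝ × ℝ, gaussianPDF 0 1 p.1 * gaussianPDF 0 1 p.2
      = ENNReal.ofReal (d p) := fun p => by
    rw [gaussianPDF, gaussianPDF, ← ENNReal.ofReal_mul (gaussianPDFReal_nonneg 0 1 p.1)]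
  simp_rw [hpt]
  rw [← ofReal_integral_eq_lintegral_ofReal
    (((integrable_gaussianPDFReal 0 1).mul_prod (integrable_gaussianPDFReal 0 1)).integrableOn)
    (ae_of_all _ fun p => mul_nonneg (gaussianPDFReal_nonneg 0 1 p.1)
      (gaussianPDFReal_nonneg 0 1 p.2))]
  congr 1
  have h2π : (0:ℝ) < 2 * π := by positivity
  calc ∫ p in W, d p ∂((volume : Measure ℝ).prod volume)
      = ∫ p : ℝ × ℝ, W.indicator d p := by
        rw [Measure.volume_eq_prod, integral_indicator hW]
    _ = ∫ p in polarCoord.target, p.1 • (W.indicator d) (polarCoord.symm p) :=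
        (integral_comp_polarCoord_symm _).symm
    _ = ∫ p in Ioi (0:ℝ) ×ˢ Ioo (-π) π,
          ((2 * π)⁻¹ * (p.1 * Real.exp (-(p.1 ^ 2) / 2))) *
            (Ioo (π / 2) (π / 2 + Real.arctan σ)).indicator (fun _ => (1:ℝ)) p.2 := by
        rw [polarCoord_target]
        refine setIntegral_congr_fun ((measurableSet_Ioi).prod measurableSet_Ioo)
          fun p hp => ?_
        obtain ⟨hr, hθ⟩ := hp
        rw [polarCoord_symm_apply]
        have hr' : (0:ℝ) < p.1 := hr
        have hmemW : (p.1 * Real.cos p.2, p.1 * Real.sin p.2) ∈ W ↔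
            p.2 ∈ Ioo (π / 2) (π / 2 + Real.arctan σ) := by
          rw [hWdef]
          simp only [mem_setOf_eq, mem_Ioo]
          rw [← wedge_iff σ hσ hθ.1 hθ.2]
          constructor
          · rintro ⟨h1, h2⟩
            constructor
            · nlinarith
            · nlinarith
          · rintro ⟨h1, h2⟩
            constructor
            · exact mul_neg_of_pos_of_neg hr' h1
            · nlinarith
        by_cases hmem : p.2 ∈ Ioo (π / 2) (π / 2 + Real.arctan σ)
        · rw [indicator_of_mem (hmemW.mpr hmem), indicator_of_mem hmem]
          have hsum : -(p.1 * Real.cos p.2 - 0) ^ 2 / (2 * 1)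
                + -(p.1 * Real.sin p.2 - 0) ^ 2 / (2 * 1) = -(p.1 ^ 2) / 2 := by
            have h := Real.sin_sq_add_cos_sq p.2
            nlinarith [h]
          have hsqrt : (Real.sqrt (2 * π * 1))⁻¹ * (Real.sqrt (2 * π * 1))⁻¹ = (2 * π)⁻¹ := by
            rw [← mul_inv, mul_one, Real.mul_self_sqrt h2π.le]
          simp only [hd_def, gaussianPDFReal, NNReal.coe_one, smul_eq_mul, mul_one]
          rw [show ((Real.sqrt (2 * π))⁻¹ * Real.exp (-(p.1 * Real.cos p.2 - 0) ^ 2 / 2)) *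
              ((Real.sqrt (2 * π))⁻¹ * Real.exp (-(p.1 * Real.sin p.2 - 0) ^ 2 / 2))
              = ((Real.sqrt (2 * π))⁻¹ * (Real.sqrt (2 * π))⁻¹) *
                (Real.exp (-(p.1 * Real.cos p.2 - 0) ^ 2 / 2) *
                  Real.exp (-(p.1 * Real.sin p.2 - 0) ^ 2 / 2)) by ring,
            ← Real.exp_add]
          rw [show -(p.1 * Real.cos p.2 - 0) ^ 2 / 2 + -(p.1 * Real.sin p.2 - 0) ^ 2 / 2
              = -(p.1 ^ 2) / 2 by simpa using hsum]
          rw [show (Real.sqrt (2 * π))⁻¹ * (Real.sqrt (2 * π))⁻¹ = (2 * π)⁻¹ by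
            simpa using hsqrt]
          ring
        · rw [indicator_of_notMem ((not_iff_not.mpr hmemW).mpr hmem),
            indicator_of_notMem hmem]
          simp
    _ = (∫ r in Ioi (0:ℝ), (2 * π)⁻¹ * (r * Real.exp (-(r ^ 2) / 2))) *
          ∫ θ in Ioo (-π) π, (Ioo (π / 2) (π / 2 + Real.arctan σ)).indicator
            (fun _ => (1:ℝ)) θ := by
        rw [Measure.volume_eq_prod, ← setIntegral_prod_mul]
    _ = Real.arctan σ / (2 * π) := by
        rw [integral_const_mul, radial_integral, setIntegral_indicator measurableSet_Ioo]
        have hss : Ioo (-π) π ∩ Ioo (π / 2) (π / 2 + Real.arctan σ)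
            = Ioo (π / 2) (π / 2 + Real.arctan σ) := by
          refine inter_eq_self_of_subset_right fun x hx => ?_
          have harcpos : 0 < Real.arctan σ := by simpa using Real.arctan_strictMono hσ
          exact ⟨by nlinarith [Real.pi_pos, hx.1], by nlinarith [hx.2]⟩
        rw [hss]
        simp only [integral_const, smul_eq_mul, mul_one, Measure.restrict_apply, MeasurableSet.univ,
          univ_inter, Real.volume_Ioo, measureReal_restrict_apply_univ, Real.volume_real_Ioo]
        rw [max_eq_left (by nlinarith [Real.arctan_lt_pi_div_two σ,
          (by simpa using Real.arctan_strictMono hσ : 0 < Real.arctan σ)])]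
        field_simp
        ring

end SignFlipAux

/-- If `X ~ N(0,1)` and `Δ ~ N(0,σ²)` are independent (with `σ > 0`), then the probability
that the binarized activation flips from `-1` to `+1`, i.e.
`P(X < 0 ∧ X + Δ > 0)`, equals `arctan σ / (2π)`. -/
theorem prob_sign_flip_neg_to_pos
    {Ω : Type*} [MeasurableSpace Ω] (μ : Measure Ω) [IsProbabilityMeasure μ]
    (σ : ℝ) (hσ : 0 < σ) (X Δ : Ω → ℝ)
    (hX : Measure.map X μ = gaussianReal 0 1)
    (hΔ : Measure.map Δ μ = gaussianReal 0 ⟨σ ^ 2, sq_nonneg σ⟩)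
    (hXΔ : IndepFun X Δ μ) :
    μ {ω | X ω < 0 ∧ 0 < X ω + Δ ω}
      = ENNReal.ofReal (Real.arctan σ / (2 * Real.pi)) := by
  have hXm : AEMeasurable X μ := by
    by_contra h
    rw [Measure.map_of_not_aemeasurable h] at hX
    exact IsProbabilityMeasure.ne_zero (gaussianReal 0 1) hX.symm
  have hΔm : AEMeasurable Δ μ := by
    by_contra h
    rw [Measure.map_of_not_aemeasurable h] at hΔ
    exact @IsProbabilityMeasure.ne_zero _ _ _ (instIsProbabilityMeasureGaussianReal 0 _) hΔ.symm
  have hW' : MeasurableSet {p : ℝ × ℝ | p.1 < 0 ∧ 0 < p.1 + p.2} := by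
    refine MeasurableSet.inter ?_ ?_
    · exact measurableSet_lt measurable_fst measurable_const
    · exact measurableSet_lt measurable_const (measurable_fst.add measurable_snd)
  have hmap : μ.map (fun ω => (X ω, Δ ω))
      = (gaussianReal 0 1).prod (gaussianReal 0 ⟨σ ^ 2, sq_nonneg σ⟩) := by
    rw [← hX, ← hΔ]
    exact (indepFun_iff_map_prod_eq_prod_map_map hXm hΔm).mp hXΔ
  have hset : {ω | X ω < 0 ∧ 0 < X ω + Δ ω}
      = (fun ω => (X ω, Δ ω)) ⁻¹' {p : ℝ × ℝ | p.1 < 0 ∧ 0 < p.1 + p.2} := rfl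
  rw [hset, ← Measure.map_apply_of_aemeasurable (hXm.prodMk hΔm) hW', hmap]
  -- replace the second gaussian by a pushforward of the standard one
  have hσ2 : gaussianReal 0 ⟨σ ^ 2, sq_nonneg σ⟩ = (gaussianReal 0 1).map (σ * ·) := by
    rw [gaussianReal_map_const_mul]
    norm_num
    rfl
  rw [hσ2]
  have hmm : (gaussianReal 0 1).prod ((gaussianReal 0 1).map (σ * ·))
      = ((gaussianReal 0 1).prod (gaussianReal 0 1)).map (Prod.map id (σ * ·)) := by
    have := Measure.map_prod_map (f := (id : ℝ → ℝ)) (g := (σ * ·))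
      (gaussianReal 0 1) (gaussianReal 0 1) measurable_id (measurable_const_mul σ)
    rw [← this, Measure.map_id]
  rw [hmm, Measure.map_apply (measurable_id.prodMap (measurable_const_mul σ)) hW']
  have hpre : Prod.map id (σ * ·) ⁻¹' {p : ℝ × ℝ | p.1 < 0 ∧ 0 < p.1 + p.2}
      = {p : ℝ × ℝ | p.1 < 0 ∧ 0 < p.1 + σ * p.2} := rfl
  rw [hpre]
  exact SignFlipAux.key σ hσ
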